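/- Let n ≥ 2, let Ω ⊂ ℝⁿ be a bounded measurable set and T₀ := diam(Ω) > 0. Let f ∈ L¹(Ω), let m > 1 and 0 < κ ≤ n, and set θ := κ/m. Then there is a constant C depending only on n and m such that sup_{x ∈ Ω, 0 < ρ < T₀} ρ^{θ−n} ∫_{B_ρ(x) ∩ Ω} |f| dy ≤ C · sup_{x' ∈ Ω, 0 < ρ' < T₀} ρ'^{(κ−n)/m} ‖f‖_{L^{m,∞}(B_{ρ'}(x') ∩ Ω)}. -/

import Mathlib

open MeasureTheory Metric Set
open scoped ENNReal

private lemma aux_key (n : ℕ) (m : ℝ) (hm : 1 < m)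
    (A : Set (EuclideanSpace ℝ (Fin n))) (hA : MeasurableSet A)
    (x : EuclideanSpace ℝ (Fin n)) (ρ : ℝ) (hρ : 0 < ρ) (hsub : A ⊆ ball x ρ)
    (f : EuclideanSpace ℝ (Fin n) → ℝ)
    (hfm : AEMeasurable f (volume.restrict A)) :
    ∫⁻ y in A, ENNReal.ofReal |f y| ≤
      ENNReal.ofReal
          ((volume (ball (0 : EuclideanSpace ℝ (Fin n)) 1)).toReal + (m - 1)⁻¹) *
        (ENNReal.ofReal (ρ ^ ((n : ℝ) - n / m)) *
          ⨆ (t : ℝ) (_ : 0 < t),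
            ENNReal.ofReal t * (volume {y ∈ A | t < |f y|}) ^ (1 / m)) := by
  have hm0 : (0 : ℝ) < m := lt_trans one_pos hm
  set vr : ℝ := (volume (ball (0 : EuclideanSpace ℝ (Fin n)) 1)).toReal with hvrdef
  have hvr0 : 0 ≤ vr := ENNReal.toReal_nonneg
  have hveq : volume (ball (0 : EuclideanSpace ℝ (Fin n)) 1) = ENNReal.ofReal vr :=
    (ENNReal.ofReal_toReal measure_ball_lt_top.ne).symm
  have hC : (0 : ℝ) < vr + (m - 1)⁻¹ :=
    add_pos_of_nonneg_of_pos hvr0 (inv_pos.mpr (by linarith))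
  set N : ℝ≥0∞ :=
    ⨆ (t : ℝ) (_ : 0 < t),
      ENNReal.ofReal t * (volume {y ∈ A | t < |f y|}) ^ (1 / m) with hNdef
  set μt : ℝ → ℝ≥0∞ := fun t => volume {y ∈ A | t < |f y|} with hμt
  have hfabs : AEMeasurable (fun y => |f y|) (volume.restrict A) := by
    simpa [Real.norm_eq_abs] using hfm.norm
  -- layer cake
  have hset : ∀ t : ℝ, {a | t < |f a|} ∩ A = {y ∈ A | t < |f y|} := by
    intro t; ext y; simp [and_comm]
  have hlc : ∫⁻ y in A, ENNReal.ofReal |f y| = ∫⁻ t in Ioi (0 : ℝ), μt t := by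
    rw [lintegral_eq_lintegral_meas_lt (volume.restrict A)
      (Filter.Eventually.of_forall fun y => abs_nonneg _) hfabs]
    refine lintegral_congr fun t => ?_
    have hnm : NullMeasurableSet {a | t < |f a|} (volume.restrict A) :=
      hfabs.nullMeasurable measurableSet_Ioi
    rw [Measure.restrict_apply₀ hnm, hset]
  rcases eq_or_ne N 0 with hN0 | hN0
  · -- the weak norm vanishes, hence the integral vanishes
    rw [hlc]
    have hz : ∀ t ∈ Ioi (0 : ℝ), μt t = 0 := by
      intro t ht
      have h1 : ENNReal.ofReal t * (volume {y ∈ A | t < |f y|}) ^ (1 / m) ≤ N :=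
        le_iSup₂ (f := fun (t : ℝ) (_ : 0 < t) =>
          ENNReal.ofReal t * (volume {y ∈ A | t < |f y|}) ^ (1 / m)) t ht
      rw [hN0, nonpos_iff_eq_zero, mul_eq_zero] at h1
      rcases h1 with h1 | h1
      · exact absurd h1 (ENNReal.ofReal_pos.mpr ht).ne'
      · rcases ENNReal.rpow_eq_zero_iff.mp h1 with ⟨h, _⟩ | ⟨_, h⟩
        · exact h
        · exact absurd h (by positivity : (0:ℝ) < 1 / m).not_gt
    calc ∫⁻ t in Ioi (0 : ℝ), μt t
        = ∫⁻ _ in Ioi (0 : ℝ), (0 : ℝ≥0∞) :=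
          setLIntegral_congr_fun measurableSet_Ioi hz
      _ = 0 := by simp
      _ ≤ _ := zero_le
  rcases eq_or_ne N ⊤ with hNtop | hNtop
  · -- the right-hand side is infinite
    rw [hNtop,
      ENNReal.mul_top (ENNReal.ofReal_pos.mpr (Real.rpow_pos_of_pos hρ _)).ne',
      ENNReal.mul_top (ENNReal.ofReal_pos.mpr hC).ne']
    exact le_top
  -- main case: 0 < N < ∞
  set N₀ : ℝ := N.toReal with hN₀def
  have hN₀ : 0 < N₀ := ENNReal.toReal_pos hN0 hNtop
  have hNe : N = ENNReal.ofReal N₀ := (ENNReal.ofReal_toReal hNtop).symm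
  -- pointwise bound from the weak norm
  have hμ_weak : ∀ t : ℝ, 0 < t → μt t ≤ ENNReal.ofReal ((N₀ / t) ^ m) := by
    intro t ht
    have h1 : ENNReal.ofReal t * (μt t) ^ (1 / m) ≤ N :=
      le_iSup₂ (f := fun (t : ℝ) (_ : 0 < t) =>
        ENNReal.ofReal t * (volume {y ∈ A | t < |f y|}) ^ (1 / m)) t ht
    have h2 : (μt t) ^ (1 / m) ≤ ENNReal.ofReal (N₀ / t) := by
      rw [ENNReal.ofReal_div_of_pos ht,
        ENNReal.le_div_iff_mul_le (Or.inl (ENNReal.ofReal_pos.mpr ht).ne')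
          (Or.inl ENNReal.ofReal_ne_top), mul_comm, ← hNe]
      exact h1
    have h3 : ((μt t) ^ (1 / m)) ^ m ≤ (ENNReal.ofReal (N₀ / t)) ^ m :=
      ENNReal.rpow_le_rpow h2 hm0.le
    rwa [← ENNReal.rpow_mul, one_div, inv_mul_cancel₀ hm0.ne', ENNReal.rpow_one,
      ENNReal.ofReal_rpow_of_pos (div_pos hN₀ ht)] at h3
  -- pointwise bound from the ball
  have hμ_ball : ∀ t : ℝ,
      μt t ≤ ENNReal.ofReal (ρ ^ ((n : ℝ))) * ENNReal.ofReal vr := by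
    intro t
    have h1 : μt t ≤ volume (ball x ρ) :=
      measure_mono fun y hy => hsub hy.1
    rwa [Measure.addHaar_ball_of_pos volume x hρ, finrank_euclideanSpace_fin,
      hveq, ← Real.rpow_natCast ρ n] at h1
  set lam : ℝ := N₀ * ρ ^ (-(n : ℝ) / m) with hlamdef
  have hlam : 0 < lam := mul_pos hN₀ (Real.rpow_pos_of_pos hρ _)
  have hsplit : ∫⁻ t in Ioi (0 : ℝ), μt t
      = (∫⁻ t in Ioc (0 : ℝ) lam, μt t) + ∫⁻ t in Ioi lam, μt t := by
    rw [← Ioc_union_Ioi_eq_Ioi hlam.le,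
      lintegral_union measurableSet_Ioi (Ioc_disjoint_Ioi le_rfl)]
  have hbound1 : ∫⁻ t in Ioc (0 : ℝ) lam, μt t
      ≤ ENNReal.ofReal (ρ ^ ((n : ℝ)) * vr * lam) := by
    calc ∫⁻ t in Ioc (0 : ℝ) lam, μt t
        ≤ ∫⁻ _ in Ioc (0 : ℝ) lam,
            (ENNReal.ofReal (ρ ^ ((n : ℝ))) * ENNReal.ofReal vr) :=
          setLIntegral_mono' measurableSet_Ioc fun t _ => hμ_ball t
      _ = ENNReal.ofReal (ρ ^ ((n : ℝ)) * vr * lam) := by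
          rw [setLIntegral_const, Real.volume_Ioc, sub_zero,
            ← ENNReal.ofReal_mul (Real.rpow_nonneg hρ.le _),
            ← ENNReal.ofReal_mul (by positivity)]
  have hintble : IntegrableOn (fun t : ℝ => t ^ (-m)) (Ioi lam) :=
    integrableOn_Ioi_rpow_of_lt (by linarith) hlam
  have hbound2 : ∫⁻ t in Ioi lam, μt t
      ≤ ENNReal.ofReal (N₀ ^ m * (-lam ^ (-m + 1) / (-m + 1))) := by
    calc ∫⁻ t in Ioi lam, μt t
        ≤ ∫⁻ t in Ioi lam, ENNReal.ofReal (N₀ ^ m) * ENNReal.ofReal (t ^ (-m)) := by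
          refine setLIntegral_mono' measurableSet_Ioi fun t ht => ?_
          have ht0 : 0 < t := lt_trans hlam ht
          refine (hμ_weak t ht0).trans (le_of_eq ?_)
          rw [← ENNReal.ofReal_mul (by positivity), Real.div_rpow hN₀.le ht0.le,
            Real.rpow_neg ht0.le, div_eq_mul_inv]
      _ = ENNReal.ofReal (N₀ ^ m) * ∫⁻ t in Ioi lam, ENNReal.ofReal (t ^ (-m)) :=
          lintegral_const_mul' _ _ ENNReal.ofReal_ne_top
      _ = ENNReal.ofReal (N₀ ^ m * (-lam ^ (-m + 1) / (-m + 1))) := by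
          rw [← ofReal_integral_eq_lintegral_ofReal hintble
            ((ae_restrict_iff' measurableSet_Ioi).2 (Filter.Eventually.of_forall
              fun t ht => Real.rpow_nonneg (lt_trans hlam ht).le _)),
            integral_Ioi_rpow_of_lt (by linarith) hlam,
            ← ENNReal.ofReal_mul (by positivity)]
  -- real-number computation
  have e1 : ρ ^ ((n : ℝ)) * lam = N₀ * ρ ^ ((n : ℝ) - n / m) := by
    rw [hlamdef, ← mul_assoc, mul_comm (ρ ^ ((n : ℝ))) N₀, mul_assoc,
      ← Real.rpow_add hρ, show (n : ℝ) + -(n : ℝ) / m = (n : ℝ) - n / m by ring]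
  have e2 : N₀ ^ m * lam ^ (-m + 1) = N₀ * ρ ^ ((n : ℝ) - n / m) := by
    have h4 : lam ^ (-m + 1)
        = N₀ ^ (-m + 1) * ρ ^ ((-(n : ℝ) / m) * (-m + 1)) := by
      rw [hlamdef, Real.mul_rpow hN₀.le (Real.rpow_pos_of_pos hρ _).le,
        ← Real.rpow_mul hρ.le]
    rw [h4, ← mul_assoc, ← Real.rpow_add hN₀,
      show m + (-m + 1) = (1 : ℝ) by ring, Real.rpow_one]
    congr 1
    congr 1
    field_simp
    ring
  have e3 : -lam ^ (-m + 1) / (-m + 1) = lam ^ (-m + 1) * (m - 1)⁻¹ := by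
    rw [show (-m + 1 : ℝ) = -(m - 1) by ring, neg_div_neg_eq, div_eq_mul_inv]
  have hreal : ρ ^ ((n : ℝ)) * vr * lam + N₀ ^ m * (-lam ^ (-m + 1) / (-m + 1))
      = (vr + (m - 1)⁻¹) * (ρ ^ ((n : ℝ) - n / m) * N₀) := by
    rw [e3, ← mul_assoc (N₀ ^ m), e2,
      show ρ ^ ((n : ℝ)) * vr * lam = vr * (ρ ^ ((n : ℝ)) * lam) by ring, e1]
    ring
  -- put everything together
  rw [hlc, hsplit, hNe]
  calc (∫⁻ t in Ioc (0 : ℝ) lam, μt t) + ∫⁻ t in Ioi lam, μt t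
      ≤ ENNReal.ofReal (ρ ^ ((n : ℝ)) * vr * lam)
        + ENNReal.ofReal (N₀ ^ m * (-lam ^ (-m + 1) / (-m + 1))) :=
        add_le_add hbound1 hbound2
    _ = ENNReal.ofReal ((vr + (m - 1)⁻¹) * (ρ ^ ((n : ℝ) - n / m) * N₀)) := by
        rw [← ENNReal.ofReal_add (by positivity)
          (mul_nonneg (by positivity) (by
            rw [e3]
            exact mul_nonneg (Real.rpow_nonneg hlam.le _) (inv_nonneg.mpr (by linarith)))), hreal]
    _ = ENNReal.ofReal (vr + (m - 1)⁻¹) *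
          (ENNReal.ofReal (ρ ^ ((n : ℝ) - n / m)) * ENNReal.ofReal N₀) := by
        rw [ENNReal.ofReal_mul hC.le,
          ENNReal.ofReal_mul (Real.rpow_nonneg hρ.le _)]

/-- The truncated fractional maximal function of the datum is controlled by its
weak Lorentz–Morrey norm: for `Ω ⊆ ℝⁿ` bounded with `T₀ = diam Ω > 0`,
`f ∈ L¹(Ω)`, `m > 1`, `0 < κ ≤ n` and `θ = κ/m`,
`sup_{x ∈ Ω, 0<ρ<T₀} ρ^{θ-n} ∫_{B_ρ(x)∩Ω} |f| ≤
  C(n,m) · sup_{x'∈Ω, 0<ρ'<T₀} ρ'^{(κ-n)/m} ‖f‖_{L^{m,∞}(B_{ρ'}(x')∩Ω)}`. -/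
theorem stmt6 (n : ℕ) (hn : 2 ≤ n) (m : ℝ) (hm : 1 < m) :
    ∃ C : ℝ, 0 < C ∧
      ∀ (Ω : Set (EuclideanSpace ℝ (Fin n)))
        (f : EuclideanSpace ℝ (Fin n) → ℝ) (κ : ℝ),
        Bornology.IsBounded Ω → MeasurableSet Ω → 0 < Metric.diam Ω →
        IntegrableOn f Ω → 0 < κ → κ ≤ n →
        (⨆ (x : EuclideanSpace ℝ (Fin n)) (_ : x ∈ Ω)
            (ρ : ℝ) (_ : 0 < ρ) (_ : ρ < Metric.diam Ω),
          ENNReal.ofReal (ρ ^ (κ / m - n)) *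
            ∫⁻ y in ball x ρ ∩ Ω, ENNReal.ofReal |f y|) ≤
          ENNReal.ofReal C *
            ⨆ (x' : EuclideanSpace ℝ (Fin n)) (_ : x' ∈ Ω)
              (ρ' : ℝ) (_ : 0 < ρ') (_ : ρ' < Metric.diam Ω),
              ENNReal.ofReal (ρ' ^ ((κ - n) / m)) *
                ⨆ (t : ℝ) (_ : 0 < t),
                  ENNReal.ofReal t *
                    (volume {y ∈ ball x' ρ' ∩ Ω | t < |f y|}) ^ (1 / m) := by
  refine ⟨(volume (ball (0 : EuclideanSpace ℝ (Fin n)) 1)).toReal + (m - 1)⁻¹,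
    add_pos_of_nonneg_of_pos ENNReal.toReal_nonneg (inv_pos.mpr (by linarith)), ?_⟩
  intro Ω f κ hb hmeas hdiam hint hκ hκn
  refine iSup_le fun x => iSup_le fun hx => iSup_le fun ρ => iSup_le fun hρ =>
    iSup_le fun hρT => ?_
  have hfm : AEMeasurable f (volume.restrict (ball x ρ ∩ Ω)) :=
    hint.aemeasurable.mono_measure (Measure.restrict_mono inter_subset_right le_rfl)
  have key := aux_key n m hm (ball x ρ ∩ Ω) (measurableSet_ball.inter hmeas)
    x ρ hρ inter_subset_left f hfm
  set N : ℝ≥0∞ :=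
    ⨆ (t : ℝ) (_ : 0 < t),
      ENNReal.ofReal t * (volume {y ∈ ball x ρ ∩ Ω | t < |f y|}) ^ (1 / m) with hNdef
  calc ENNReal.ofReal (ρ ^ (κ / m - n)) * ∫⁻ y in ball x ρ ∩ Ω, ENNReal.ofReal |f y|
      ≤ ENNReal.ofReal (ρ ^ (κ / m - n)) *
          (ENNReal.ofReal
              ((volume (ball (0 : EuclideanSpace ℝ (Fin n)) 1)).toReal + (m - 1)⁻¹) *
            (ENNReal.ofReal (ρ ^ ((n : ℝ) - n / m)) * N)) :=
        mul_le_mul_right key _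
    _ = ENNReal.ofReal
          ((volume (ball (0 : EuclideanSpace ℝ (Fin n)) 1)).toReal + (m - 1)⁻¹) *
          (ENNReal.ofReal (ρ ^ ((κ - n) / m)) * N) := by
        have : ENNReal.ofReal (ρ ^ (κ / m - n)) * ENNReal.ofReal (ρ ^ ((n : ℝ) - n / m))
            = ENNReal.ofReal (ρ ^ ((κ - n) / m)) := by
          rw [← ENNReal.ofReal_mul (Real.rpow_nonneg hρ.le _), ← Real.rpow_add hρ]
          congr 1
          ring_nf
        rw [← this]
        ring
    _ ≤ _ := by
        refine mul_le_mul_right ?_ _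
        exact le_iSup_of_le x (le_iSup_of_le hx (le_iSup_of_le ρ
          (le_iSup_of_le hρ (le_iSup_of_le hρT le_rfl))))
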